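/- Let P be a set of primes such that the sum of reciprocals ∑_{s∈P} 1/s diverges. Then the natural density of the set of positive integers n all of whose odd-exponent prime factors lie outside P is zero. That is, if S_N denotes the set of n ≤ N such that every prime s ∈ P divides n to an even power, then |S_N|/N → 0 as N → ∞. -/

import Mathlib

lemma crt_count (a b : ℕ) (ha : a ≠ 0) (hb : b ≠ 0) (hab : a.Coprime b)
    (p q : ℕ → Prop) [DecidablePred p] [DecidablePred q] :
    ((Finset.range (a*b)).filter (fun r => p (r % a) ∧ q (r % b))).card
      = ((Finset.range a).filter p).card * ((Finset.range b).filter q).card := by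
  rw [← Finset.card_product, ← Finset.filter_product]
  apply Finset.card_bij' (fun r _ => (r % a, r % b))
    (fun x _ => (Nat.chineseRemainder hab x.1 x.2 : ℕ))
  · intro r hr
    simp only [Finset.mem_filter, Finset.mem_range] at hr
    simp only [Finset.mem_filter, Finset.mem_product, Finset.mem_range]
    exact ⟨⟨Nat.mod_lt _ (Nat.pos_of_ne_zero ha), Nat.mod_lt _ (Nat.pos_of_ne_zero hb)⟩,
      hr.2.1, hr.2.2⟩
  · intro x hx
    simp only [Finset.mem_filter, Finset.mem_product, Finset.mem_range] at hx
    obtain ⟨⟨hx1, hx2⟩, hp, hq⟩ := hx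
    have h1 := (Nat.chineseRemainder hab x.1 x.2).2.1
    have h2 := (Nat.chineseRemainder hab x.1 x.2).2.2
    have hlt := Nat.chineseRemainder_lt_mul hab x.1 x.2 ha hb
    have e1 : (Nat.chineseRemainder hab x.1 x.2 : ℕ) % a = x.1 := by
      rw [Nat.ModEq] at h1; rw [h1, Nat.mod_eq_of_lt hx1]
    have e2 : (Nat.chineseRemainder hab x.1 x.2 : ℕ) % b = x.2 := by
      rw [Nat.ModEq] at h2; rw [h2, Nat.mod_eq_of_lt hx2]
    simp only [Finset.mem_filter, Finset.mem_range]
    exact ⟨hlt, by rw [e1]; exact hp, by rw [e2]; exact hq⟩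
  · intro r hr
    simp only [Finset.mem_filter, Finset.mem_range] at hr
    have : r ≡ (Nat.chineseRemainder hab (r % a) (r % b) : ℕ) [MOD a*b] :=
      Nat.chineseRemainder_modEq_unique hab (Nat.mod_modEq r a).symm (Nat.mod_modEq r b).symm
    have hlt := Nat.chineseRemainder_lt_mul hab (r % a) (r % b) ha hb
    have := this.symm
    rw [Nat.ModEq, Nat.mod_eq_of_lt hlt, Nat.mod_eq_of_lt hr.1] at this
    exact this
  · intro x hx
    simp only [Finset.mem_filter, Finset.mem_product, Finset.mem_range] at hx
    obtain ⟨⟨hx1, hx2⟩, hp, hq⟩ := hx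
    have h1 := (Nat.chineseRemainder hab x.1 x.2).2.1
    have h2 := (Nat.chineseRemainder hab x.1 x.2).2.2
    have e1 : (Nat.chineseRemainder hab x.1 x.2 : ℕ) % a = x.1 := by
      rw [Nat.ModEq] at h1; rw [h1, Nat.mod_eq_of_lt hx1]
    have e2 : (Nat.chineseRemainder hab x.1 x.2 : ℕ) % b = x.2 := by
      rw [Nat.ModEq] at h2; rw [h2, Nat.mod_eq_of_lt hx2]
    rw [e1, e2]

lemma prime_count (t : ℕ) (ht : t.Prime) :
    ((Finset.range (t^2)).filter (fun x => t ∣ x → t^2 ∣ x)).card = t^2 - t + 1 := by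
  have ht2 := ht.two_le
  have hbad : (Finset.range (t^2)).filter (fun x => ¬ (t ∣ x → t^2 ∣ x))
      = (Finset.Ico 1 t).image (t * ·) := by
    ext x
    simp only [Finset.mem_filter, Finset.mem_range, Finset.mem_image, Finset.mem_Ico,
      _root_.not_imp]
    constructor
    · rintro ⟨hx, ⟨k, rfl⟩, hnd⟩
      refine ⟨k, ⟨?_, ?_⟩, rfl⟩
      · rcases Nat.eq_zero_or_pos k with rfl | h
        · exact absurd (by simp) hnd
        · exact h
      · by_contra h
        push_neg at h
        exact absurd (by calc t^2 = t * t := sq t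
                            _ ≤ t * k := Nat.mul_le_mul_left t h
                            _ < t^2 := hx) (lt_irrefl _)
    · rintro ⟨k, ⟨hk1, hk2⟩, rfl⟩
      refine ⟨?_, ⟨k, rfl⟩, ?_⟩
      · calc t * k < t * t := by
              exact mul_lt_mul_of_pos_left hk2 (by omega)
          _ = t^2 := (sq t).symm
      · intro hd
        rw [sq] at hd
        have h1 : t ∣ k := (Nat.mul_dvd_mul_iff_left (by omega : 0 < t)).mp hd
        have := Nat.le_of_dvd (by omega) h1
        omega
  have hbadcard : ((Finset.range (t^2)).filter (fun x => ¬ (t ∣ x → t^2 ∣ x))).card = t - 1 := by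
    rw [hbad, Finset.card_image_of_injective _ (mul_right_injective₀ (by omega : t ≠ 0)),
      Nat.card_Ico]
  have := Finset.card_filter_add_card_filter_not
    (s := Finset.range (t^2)) (p := fun x => t ∣ x → t^2 ∣ x)
  rw [hbadcard, Finset.card_range] at this
  have hle : t ≤ t^2 := Nat.le_self_pow (by norm_num) t
  omega

lemma count_F (F : Finset ℕ) (hF : ∀ s ∈ F, s.Prime) :
    ((Finset.range (∏ s ∈ F, s^2)).filter (fun r => ∀ s ∈ F, s ∣ r → s^2 ∣ r)).card
      = ∏ s ∈ F, (s^2 - s + 1) := by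
  classical
  induction F using Finset.induction_on with
  | empty => simp
  | @insert a F haF ih =>
    have hprime : a.Prime := hF a (Finset.mem_insert_self a F)
    have hFp : ∀ s ∈ F, s.Prime := fun s hs => hF s (Finset.mem_insert_of_mem hs)
    have hMne : (∏ s ∈ F, s^2) ≠ 0 :=
      Finset.prod_ne_zero_iff.mpr fun s hs => pow_ne_zero _ (hFp s hs).ne_zero
    have hcop : (a^2).Coprime (∏ s ∈ F, s^2) := by
      apply Nat.Coprime.pow_left
      apply Nat.Coprime.prod_right
      intro s hs
      exact ((Nat.coprime_primes hprime (hFp s hs)).mpr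
        (by rintro rfl; exact haF hs)).pow_right _
    rw [Finset.prod_insert haF, Finset.prod_insert haF]
    have hfe : (Finset.range (a^2 * ∏ s ∈ F, s^2)).filter
        (fun r => ∀ s ∈ insert a F, s ∣ r → s^2 ∣ r)
        = (Finset.range (a^2 * ∏ s ∈ F, s^2)).filter
        (fun r => (a ∣ r % a^2 → a^2 ∣ r % a^2) ∧
          ∀ s ∈ F, s ∣ r % (∏ s ∈ F, s^2) → s^2 ∣ r % (∏ s ∈ F, s^2)) := by
      apply Finset.filter_congr
      intro r _
      simp only [Finset.forall_mem_insert]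
      constructor
      · rintro ⟨h1, h2⟩
        refine ⟨fun hd => ?_, fun s hs hd => ?_⟩
        · rw [Nat.dvd_mod_iff dvd_rfl]
          exact h1 ((Nat.dvd_mod_iff (dvd_pow_self a two_ne_zero)).mp hd)
        · have hs2 : s^2 ∣ ∏ s ∈ F, s^2 := Finset.dvd_prod_of_mem (fun s => s^2) hs
          have hs1 : s ∣ ∏ s ∈ F, s^2 := dvd_trans (dvd_pow_self s two_ne_zero) hs2
          rw [Nat.dvd_mod_iff hs2]
          exact h2 s hs ((Nat.dvd_mod_iff hs1).mp hd)
      · rintro ⟨h1, h2⟩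
        refine ⟨fun hd => ?_, fun s hs hd => ?_⟩
        · rw [← Nat.dvd_mod_iff (dvd_refl (a^2))]
          exact h1 ((Nat.dvd_mod_iff (dvd_pow_self a two_ne_zero)).mpr hd)
        · have hs2 : s^2 ∣ ∏ s ∈ F, s^2 := Finset.dvd_prod_of_mem (fun s => s^2) hs
          have hs1 : s ∣ ∏ s ∈ F, s^2 := dvd_trans (dvd_pow_self s two_ne_zero) hs2
          rw [← Nat.dvd_mod_iff hs2]
          exact h2 s hs ((Nat.dvd_mod_iff hs1).mpr hd)
    rw [hfe, crt_count (a^2) (∏ s ∈ F, s^2) (pow_ne_zero _ hprime.ne_zero) hMne hcop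
      (fun x => a ∣ x → a^2 ∣ x) (fun x => ∀ s ∈ F, s ∣ x → s^2 ∣ x),
      prime_count a hprime, ih hFp]

lemma count_bound (M N : ℕ) (hM : 0 < M) (p : ℕ → Prop) [DecidablePred p] :
    ((Finset.Icc 1 N).filter (fun n => p (n % M))).card
      ≤ (N / M + 1) * ((Finset.range M).filter p).card := by
  have h := Finset.card_le_card_of_injOn (fun n => (n / M, n % M))
    (s := (Finset.Icc 1 N).filter (fun n => p (n % M)))
    (t := (Finset.range (N / M + 1)) ×ˢ ((Finset.range M).filter p))
    (by
      intro n hn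
      simp only [Finset.mem_coe, Finset.mem_filter, Finset.mem_Icc] at hn
      simp only [Finset.mem_coe, Finset.mem_product, Finset.mem_range, Finset.mem_filter]
      exact ⟨Nat.lt_succ_of_le (Nat.div_le_div_right hn.1.2),
        ⟨Nat.mod_lt _ hM, hn.2⟩⟩)
    (by
      intro n₁ h₁ n₂ h₂ he
      simp only [Prod.mk.injEq] at he
      obtain ⟨e1, e2⟩ := he
      have h1 := Nat.div_add_mod n₁ M
      have h2 := Nat.div_add_mod n₂ M
      rw [e1, e2] at h1
      omega)
  rwa [Finset.card_product, Finset.card_range] at h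

lemma factor_bound (s : ℕ) (hs : s.Prime) :
    ((s^2 - s + 1 : ℕ) : ℝ) / ((s:ℝ)^2) ≤ Real.exp (-(1/2 * (1/(s:ℝ)))) := by
  have h2 : (2:ℝ) ≤ (s:ℝ) := by exact_mod_cast hs.two_le
  have hs0 : (0:ℝ) < (s:ℝ) := by linarith
  have hle : s ≤ s^2 := Nat.le_self_pow two_ne_zero s
  have hcast : ((s^2 - s + 1 : ℕ):ℝ) = (s:ℝ)^2 - (s:ℝ) + 1 := by
    push_cast [hle]; ring
  have step1 : ((s^2 - s + 1 : ℕ):ℝ) / ((s:ℝ)^2) ≤ 1 - 1/(2*(s:ℝ)) := by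
    rw [hcast, div_le_iff₀ (by positivity)]
    have hexp : (1 - 1/(2*(s:ℝ))) * (s:ℝ)^2 = (s:ℝ)^2 - (s:ℝ)/2 := by
      field_simp
    rw [hexp]
    linarith
  have step2 : 1 - 1/(2*(s:ℝ)) ≤ Real.exp (-(1/2 * (1/(s:ℝ)))) := by
    have h := Real.add_one_le_exp (-(1/2 * (1/(s:ℝ))))
    have he : -(1/2 * (1/(s:ℝ))) + 1 = 1 - 1/(2*(s:ℝ)) := by
      field_simp
      ring
    linarith
  linarith

open scoped Classical in
/-- If `P` is a set of primes whose sum of reciprocals diverges, then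
the natural density of the set of positive integers all of whose odd-exponent prime
factors lie outside `P` (i.e. every prime of `P` divides them to an even power)
is zero. -/
theorem stmt2 (P : Set ℕ) (hP : ∀ s ∈ P, Nat.Prime s)
    (hdiv : ¬ Summable (fun s : P => (1 : ℝ) / ((s : ℕ) : ℝ))) :
    Filter.Tendsto
      (fun N : ℕ =>
        (((Finset.Icc 1 N).filter
          (fun n => ∀ s ∈ P, Even (n.factorization s))).card : ℝ) / (N : ℝ))
      Filter.atTop (nhds 0) := by
  classical
  rw [Metric.tendsto_atTop]
  intro ε hε
  have hε2 : 0 < ε/2 := by linarith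
  obtain ⟨T, hT⟩ : ∃ T : Finset P, -2 * Real.log (ε/2) < ∑ s ∈ T, (1:ℝ)/((s:ℕ):ℝ) := by
    by_contra h
    push_neg at h
    exact hdiv (summable_of_sum_le (fun s => by positivity) h)
  set F : Finset ℕ := T.image Subtype.val with hFdef
  have hFP : ∀ s ∈ F, s ∈ P := by
    intro s hs
    simp only [hFdef, Finset.mem_image] at hs
    obtain ⟨t, _, rfl⟩ := hs
    exact t.2
  have hFprime : ∀ s ∈ F, Nat.Prime s := fun s hs => hP s (hFP s hs)
  have hsumF : ∑ s ∈ F, (1:ℝ)/(s:ℝ) = ∑ s ∈ T, (1:ℝ)/((s:ℕ):ℝ) := by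
    rw [hFdef]
    exact Finset.sum_image (fun x _ y _ h => Subtype.ext h)
  set M := ∏ s ∈ F, s^2 with hMdef
  set K := ∏ s ∈ F, (s^2 - s + 1) with hKdef
  have hMpos : 0 < M := Finset.prod_pos (fun s hs => pow_pos (hFprime s hs).pos 2)
  have hKM : (K:ℝ)/(M:ℝ) < ε/2 := by
    have heq : (K:ℝ)/(M:ℝ) = ∏ s ∈ F, (((s^2-s+1:ℕ):ℝ)/((s:ℝ)^2)) := by
      rw [hKdef, hMdef, Finset.prod_div_distrib, Nat.cast_prod, Nat.cast_prod]
      congr 1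
      exact Finset.prod_congr rfl (fun s _ => by push_cast; ring)
    have hple : ∏ s ∈ F, (((s^2-s+1:ℕ):ℝ)/((s:ℝ)^2))
        ≤ ∏ s ∈ F, Real.exp (-(1/2 * (1/(s:ℝ)))) :=
      Finset.prod_le_prod (fun s _ => by positivity)
        (fun s hs => factor_bound s (hFprime s hs))
    have hexp : ∏ s ∈ F, Real.exp (-(1/2 * (1/(s:ℝ))))
        = Real.exp (∑ s ∈ F, -(1/2 * (1/(s:ℝ)))) := (Real.exp_sum F _).symm
    have hsum2 : ∑ s ∈ F, -(1/2 * (1/(s:ℝ))) = -(1/2 * ∑ s ∈ F, (1:ℝ)/(s:ℝ)) := by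
      rw [Finset.mul_sum, ← Finset.sum_neg_distrib]
    have hfin : Real.exp (-(1/2 * ∑ s ∈ F, (1:ℝ)/(s:ℝ))) < ε/2 := by
      rw [← Real.exp_log hε2]
      apply Real.exp_lt_exp.mpr
      rw [hsumF]
      linarith
    rw [heq]
    calc ∏ s ∈ F, (((s^2-s+1:ℕ):ℝ)/((s:ℝ)^2))
        ≤ Real.exp (∑ s ∈ F, -(1/2 * (1/(s:ℝ)))) := hexp ▸ hple
      _ = Real.exp (-(1/2 * ∑ s ∈ F, (1:ℝ)/(s:ℝ))) := by rw [hsum2]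
      _ < ε/2 := hfin
  obtain ⟨N₁, hN₁⟩ := (Metric.tendsto_atTop.mp
    (tendsto_const_div_atTop_nhds_zero_nat (K:ℝ))) (ε/2) hε2
  refine ⟨max N₁ 1, fun N hN => ?_⟩
  have hN1 : 1 ≤ N := le_trans (le_max_right _ _) hN
  have hNpos : (0:ℝ) < (N:ℝ) := by exact_mod_cast hN1
  rw [Real.dist_eq, sub_zero, abs_of_nonneg (by positivity)]
  have hsub : (Finset.Icc 1 N).filter (fun n => ∀ s ∈ P, Even (n.factorization s))
      ⊆ (Finset.Icc 1 N).filter (fun n => ∀ s ∈ F, s ∣ n % M → s^2 ∣ n % M) := by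
    intro n hn
    simp only [Finset.mem_filter, Finset.mem_Icc] at hn ⊢
    obtain ⟨⟨hn1, hn2⟩, heven⟩ := hn
    refine ⟨⟨hn1, hn2⟩, fun s hs hd => ?_⟩
    have hsp := hFprime s hs
    have hs2M : s^2 ∣ M := Finset.dvd_prod_of_mem _ hs
    have hsM : s ∣ M := dvd_trans (dvd_pow_self s two_ne_zero) hs2M
    rw [Nat.dvd_mod_iff hs2M]
    have hdn : s ∣ n := (Nat.dvd_mod_iff hsM).mp hd
    have hn0 : n ≠ 0 := by omega
    have h1 : 0 < n.factorization s := hsp.factorization_pos_of_dvd hn0 hdn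
    obtain ⟨k, hk⟩ := heven s (hFP s hs)
    have h2 : 2 ≤ n.factorization s := by omega
    exact (Nat.Prime.pow_dvd_iff_le_factorization hsp hn0).mpr h2
  have hcard1 := Finset.card_le_card hsub
  have hcount : ((Finset.range M).filter (fun x => ∀ s ∈ F, s ∣ x → s^2 ∣ x)).card = K := by
    rw [hMdef, hKdef]; exact count_F F hFprime
  have hcard2 := count_bound M N hMpos (fun x => ∀ s ∈ F, s ∣ x → s^2 ∣ x)
  rw [hcount] at hcard2
  have hcard : (((Finset.Icc 1 N).filter
      (fun n => ∀ s ∈ P, Even (n.factorization s))).card : ℝ) ≤ ((N/M + 1) * K : ℕ) := by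
    exact_mod_cast le_trans hcard1 hcard2
  have hKN : (K:ℝ)/(N:ℝ) < ε/2 := by
    have := hN₁ N (le_trans (le_max_left _ _) hN)
    rwa [Real.dist_eq, sub_zero, abs_of_nonneg (by positivity)] at this
  have hMr : (0:ℝ) < (M:ℝ) := by exact_mod_cast hMpos
  have hdivle : ((N/M : ℕ):ℝ) ≤ (N:ℝ)/(M:ℝ) := Nat.cast_div_le
  have hmid : (((N/M + 1) * K : ℕ):ℝ)/(N:ℝ) ≤ (K:ℝ)/(M:ℝ) + (K:ℝ)/(N:ℝ) := by
    push_cast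
    have hKnn : (0:ℝ) ≤ (K:ℝ) := Nat.cast_nonneg K
    have h1 : (((N/M : ℕ):ℝ) + 1) * (K:ℝ) ≤ ((N:ℝ)/(M:ℝ) + 1) * (K:ℝ) := by
      apply mul_le_mul_of_nonneg_right _ hKnn
      linarith
    have h2 : (((N:ℝ)/(M:ℝ) + 1) * (K:ℝ))/(N:ℝ) = (K:ℝ)/(M:ℝ) * ((N:ℝ)/(N:ℝ)) + (K:ℝ)/(N:ℝ) := by
      field_simp
    rw [div_self (ne_of_gt hNpos), mul_one] at h2
    calc (((N/M : ℕ):ℝ) + 1) * (K:ℝ)/(N:ℝ) ≤ (((N:ℝ)/(M:ℝ) + 1) * (K:ℝ))/(N:ℝ) := by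
          gcongr
      _ = (K:ℝ)/(M:ℝ) + (K:ℝ)/(N:ℝ) := h2
  calc (((Finset.Icc 1 N).filter
      (fun n => ∀ s ∈ P, Even (n.factorization s))).card : ℝ) / (N:ℝ)
      ≤ (((N/M + 1) * K : ℕ):ℝ)/(N:ℝ) := by gcongr
    _ ≤ (K:ℝ)/(M:ℝ) + (K:ℝ)/(N:ℝ) := hmid
    _ < ε/2 + ε/2 := by exact add_lt_add hKM hKN
    _ = ε := by ring
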